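/- arXiv:2009.11958 — 3 statements merged into one kernel-verified Lean document; each statement's English description precedes it below -/
import Mathlib

section
/- Let A < 0, Q > 0, G ≥ 0 and let Ω solve Ω'(t) = 2AΩ(t) + Q − η(t)GΩ(t)² on [0,∞) for a measurable switching signal η : [0,∞) → {0,1}. If Ω(0) ∈ (Ω_ss, Ω̄_ss) with Ω_ss = Q/(−A + √(A² + QG)) and Ω̄_ss = −Q/(2A), then Ω(t) ∈ (Ω_ss, Ω̄_ss) for all t ≥ 0. -/
/-- Positive invariance of (Ω_ss, Ω̄_ss) for the switched covariance dynamics, A < 0. -/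
theorem switched_covariance_invariance_stable (A Q G : ℝ)
    (hA : A < 0) (hQ : 0 < Q) (hG : 0 ≤ G)
    (η : ℝ → ℝ) (hη : Measurable η) (hη01 : ∀ t, η t = 0 ∨ η t = 1)
    (Ω : ℝ → ℝ)
    (hode : ∀ t, 0 ≤ t → HasDerivAt Ω (2 * A * Ω t + Q - η t * G * (Ω t) ^ 2) t)
    (h0 : Ω 0 ∈ Set.Ioo (Q / (-A + Real.sqrt (A ^ 2 + Q * G))) (-Q / (2 * A))) :
    ∀ t, 0 ≤ t →
      Ω t ∈ Set.Ioo (Q / (-A + Real.sqrt (A ^ 2 + Q * G))) (-Q / (2 * A)) := by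
  set s := Real.sqrt (A ^ 2 + Q * G) with hs_def
  have hs0 : 0 ≤ s := Real.sqrt_nonneg _
  have hs2 : s ^ 2 = A ^ 2 + Q * G := Real.sq_sqrt (by positivity)
  have hsA : -A ≤ s := by
    have h1 : Real.sqrt (A ^ 2) ≤ s := Real.sqrt_le_sqrt (by nlinarith)
    rwa [Real.sqrt_sq_eq_abs, abs_of_neg hA] at h1
  have hd : 0 < -A + s := by linarith
  have h2A : (2 : ℝ) * A ≠ 0 := ne_of_lt (by linarith)
  set a := Q / (-A + s) with ha_def
  set b := -Q / (2 * A) with hb_def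
  have ha_pos : 0 < a := div_pos hQ hd
  have hb_pos : 0 < b := div_pos_iff.mpr (Or.inr ⟨by linarith, by linarith⟩)
  have h2Ab : 2 * A * b = -Q := by
    rw [hb_def]; field_simp; simp [hA.ne]
  have hGa : G * a = A + s := by
    rw [ha_def]; field_simp
    nlinarith [hs2]
  have hGa2 : 2 * A * a + Q = G * a ^ 2 := by
    rw [ha_def]; field_simp
    linear_combination hs2
  have hcont : ∀ t : ℝ, 0 ≤ t → ContinuousAt Ω t := fun t ht => (hode t ht).continuousAt
  -- upper bound
  have hub : ∀ t, 0 ≤ t → Ω t < b := by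
    have huD : ∀ t : ℝ, 0 ≤ t → HasDerivAt (fun r => (Ω r - b) * Real.exp (-(2 * A) * r))
        ((2 * A * Ω t + Q - η t * G * (Ω t) ^ 2) * Real.exp (-(2 * A) * t)
          + (Ω t - b) * (Real.exp (-(2 * A) * t) * -(2 * A))) t := by
      intro t ht
      have h1 : HasDerivAt (fun r : ℝ => -(2 * A) * r) (-(2 * A)) t := by
        simpa using (hasDerivAt_id t).const_mul (-(2 * A))
      exact ((hode t ht).sub_const b).mul h1.exp
    have hu : AntitoneOn (fun r => (Ω r - b) * Real.exp (-(2 * A) * r)) (Set.Ici 0) := by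
      apply antitoneOn_of_deriv_nonpos (convex_Ici 0)
      · exact fun t ht => (huD t ht).continuousAt.continuousWithinAt
      · intro t ht
        rw [interior_Ici] at ht
        exact (huD t ht.le).differentiableAt.differentiableWithinAt
      · intro t ht
        rw [interior_Ici] at ht
        rw [(huD t ht.le).deriv]
        have he : 0 < Real.exp (-(2 * A) * t) := Real.exp_pos _
        have hη0 : 0 ≤ η t := by rcases hη01 t with h | h <;> rw [h] <;> norm_num
        have hsq : 0 ≤ η t * G * (Ω t) ^ 2 := by positivity
        nlinarith [h2Ab]
    intro t ht
    have h1 := hu (Set.self_mem_Ici) (Set.mem_Ici.mpr ht) ht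
    simp only [mul_zero, neg_zero, Real.exp_zero, mul_one] at h1
    have he : 0 < Real.exp (-(2 * A) * t) := Real.exp_pos _
    nlinarith [h0.2]
  -- lower bound
  have hlb : ∀ t, 0 ≤ t → a < Ω t := by
    by_contra hcon
    push_neg at hcon
    obtain ⟨t₁, ht₁, hΩt₁⟩ := hcon
    set K := {r : ℝ | r ∈ Set.Icc 0 t₁ ∧ Ω r ≤ a} with hK
    have hKne : K.Nonempty := ⟨t₁, ⟨ht₁, le_refl _⟩, hΩt₁⟩
    have hKbdd : BddBelow K := ⟨0, fun r hr => hr.1.1⟩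
    have hKclosed : IsClosed K := by
      rw [← isOpen_compl_iff, isOpen_iff_mem_nhds]
      intro r hr
      by_cases hrI : r ∈ Set.Icc 0 t₁
      · have hra : a < Ω r := by
          by_contra h
          exact hr ⟨hrI, le_of_not_gt h⟩
        have hnb := (hcont r hrI.1).preimage_mem_nhds (Ioi_mem_nhds hra)
        filter_upwards [hnb] with x hx hxK
        exact absurd hxK.2 (not_le.mpr hx)
      · have hnb := isClosed_Icc.isOpen_compl.mem_nhds hrI
        filter_upwards [hnb] with x hx hxK
        exact hx hxK.1
    set T := sInf K with hT_def
    have hTK : T ∈ K := hKclosed.csInf_mem hKne hKbdd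
    have hT0 : 0 < T := by
      rcases lt_or_eq_of_le hTK.1.1 with h | h
      · exact h
      · exfalso
        have := hTK.2
        rw [← h] at this
        exact absurd this (not_le.mpr h0.1)
    have hmid : ∀ r, 0 ≤ r → r < T → a < Ω r := by
      intro r hr0 hrT
      by_contra h
      have hrK : r ∈ K := ⟨⟨hr0, le_trans hrT.le hTK.1.2⟩, le_of_not_gt h⟩
      exact absurd (csInf_le hKbdd hrK) (not_le.mpr hrT)
    set L := G * b - A + s with hL_def
    have hwD : ∀ r : ℝ, 0 ≤ r → HasDerivAt (fun r => (Ω r - a) * Real.exp (L * r))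
        ((2 * A * Ω r + Q - η r * G * (Ω r) ^ 2) * Real.exp (L * r)
          + (Ω r - a) * (Real.exp (L * r) * L)) r := by
      intro r hr
      have h1 : HasDerivAt (fun x : ℝ => L * x) L r := by
        simpa using (hasDerivAt_id r).const_mul L
      exact ((hode r hr).sub_const a).mul h1.exp
    have hw : MonotoneOn (fun r => (Ω r - a) * Real.exp (L * r)) (Set.Icc 0 T) := by
      apply monotoneOn_of_deriv_nonneg (convex_Icc 0 T)
      · exact fun r hr => (hwD r hr.1).continuousAt.continuousWithinAt
      · intro r hr
        rw [interior_Icc] at hr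
        exact (hwD r hr.1.le).differentiableAt.differentiableWithinAt
      · intro r hr
        rw [interior_Icc] at hr
        rw [(hwD r hr.1.le).deriv]
        have he : 0 < Real.exp (L * r) := Real.exp_pos _
        have hra : a < Ω r := hmid r hr.1.le hr.2
        have hrb : Ω r < b := hub r hr.1.le
        have key : 0 ≤ 2 * A * Ω r + Q - η r * G * (Ω r) ^ 2 + (Ω r - a) * L := by
          rcases hη01 r with h | h
          · rw [h]
            have h1 : 0 ≤ (G * a + G * b) * (Ω r - a) := by
              apply mul_nonneg
              · have := mul_nonneg hG ha_pos.le
                have := mul_nonneg hG hb_pos.le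
                linarith
              · linarith
            have h2 : 0 ≤ G * a ^ 2 := by positivity
            rw [hL_def]
            nlinarith [hGa, hGa2]
          · rw [h]
            have hid : 2 * A * Ω r + Q - 1 * G * (Ω r) ^ 2 + (Ω r - a) * L
                = G * (Ω r - a) * (b - Ω r) := by
              rw [hL_def]
              linear_combination (a - Ω r) * hGa + hGa2
            rw [hid]
            have : 0 ≤ Ω r - a := by linarith
            have : 0 ≤ b - Ω r := by linarith
            positivity
        nlinarith [key]
    have hmono := hw (Set.mem_Icc.mpr ⟨le_refl 0, hT0.le⟩)
      (Set.mem_Icc.mpr ⟨hT0.le, le_refl T⟩) hT0.le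
    simp only [mul_zero, Real.exp_zero, mul_one] at hmono
    have he : 0 < Real.exp (L * T) := Real.exp_pos _
    have h1 : (Ω T - a) * Real.exp (L * T) ≤ 0 :=
      mul_nonpos_of_nonpos_of_nonneg (by linarith [hTK.2]) he.le
    linarith [h0.1, hmono, h1]
  exact fun t ht => Set.mem_Ioo.mpr ⟨hlb t ht, hub t ht⟩
end

section
/- Let A > 0, Q > 0, G > 0 and let Ω solve Ω'(t) = 2AΩ(t) + Q − η(t)GΩ(t)² on [0,∞) for a measurable switching signal η : [0,∞) → {0,1}. If Ω(0) > Ω_ss = Q/(−A + √(A² + QG)), then Ω(t) > Ω_ss for all t ≥ 0. -/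
/-- Positive invariance of (Ω_ss, ∞) for the switched covariance dynamics, A > 0. -/
theorem switched_covariance_invariance_unstable (A Q G : ℝ)
    (hA : 0 < A) (hQ : 0 < Q) (hG : 0 < G)
    (η : ℝ → ℝ) (hη : Measurable η) (hη01 : ∀ t, η t = 0 ∨ η t = 1)
    (Ω : ℝ → ℝ)
    (hode : ∀ t, 0 ≤ t → HasDerivAt Ω (2 * A * Ω t + Q - η t * G * (Ω t) ^ 2) t)
    (h0 : Q / (-A + Real.sqrt (A ^ 2 + Q * G)) < Ω 0) :
    ∀ t, 0 ≤ t → Q / (-A + Real.sqrt (A ^ 2 + Q * G)) < Ω t := by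
  set s := Real.sqrt (A ^ 2 + Q * G) with hs_def
  have hs2 : s ^ 2 = A ^ 2 + Q * G := Real.sq_sqrt (by positivity)
  have hsnn : 0 ≤ s := Real.sqrt_nonneg _
  have hsA : A < s := by nlinarith
  set c := Q / (-A + s) with hc_def
  have hd : 0 < -A + s := by linarith
  have hcpos : 0 < c := div_pos hQ hd
  have h2 : (-A + s) * c = Q := by
    rw [hc_def]; field_simp
  have hGc : G * c = A + s := by
    rw [hc_def]; rw [div_eq_iff (ne_of_gt hd)] at *
    nlinarith
  intro T hT
  by_contra hcon
  push_neg at hcon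
  -- the set of times in [0,T] where Ω has dropped to or below c
  set S : Set ℝ := Set.Icc (0:ℝ) T ∩ Ω ⁻¹' Set.Iic c with hS_def
  have hSne : S.Nonempty := ⟨T, ⟨hT, le_refl T⟩, hcon⟩
  have hcontIcc : ContinuousOn Ω (Set.Icc 0 T) := fun t ht =>
    ((hode t ht.1).continuousAt).continuousWithinAt
  have hSclosed : IsClosed S :=
    hcontIcc.preimage_isClosed_of_isClosed isClosed_Icc isClosed_Iic
  have hSbdd : BddBelow S := ⟨0, fun x hx => hx.1.1⟩
  set t₁ := sInf S with ht₁_def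
  have ht₁S : t₁ ∈ S := hSclosed.csInf_mem hSne hSbdd
  have ht₁0 : 0 ≤ t₁ := ht₁S.1.1
  have ht₁T : t₁ ≤ T := ht₁S.1.2
  have ht₁c : Ω t₁ ≤ c := ht₁S.2
  have hbefore : ∀ t, 0 ≤ t → t < t₁ → c < Ω t := by
    intro t ht htl
    by_contra h
    push_neg at h
    exact absurd (csInf_le hSbdd ⟨⟨ht, le_trans htl.le ht₁T⟩, h⟩) (not_le.2 htl)
  -- bound Ω on [0, t₁]
  have hcont1 : ContinuousOn Ω (Set.Icc 0 t₁) :=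
    hcontIcc.mono (Set.Icc_subset_Icc_right ht₁T)
  obtain ⟨m, hm, hMx⟩ := isCompact_Icc.exists_isMaxOn ⟨0, Set.left_mem_Icc.2 ht₁0⟩ hcont1
  have hM : ∀ y ∈ Set.Icc 0 t₁, Ω y ≤ Ω m := fun y hy => hMx hy
  set M := Ω m with hM_def
  set L := G * M + s - A with hL_def
  have hM0 : Ω 0 ≤ M := hM 0 (Set.left_mem_Icc.2 ht₁0)
  have hMpos : 0 < M := lt_of_lt_of_le (lt_trans hcpos h0) hM0
  have hLpos : 0 < L := by rw [hL_def]; nlinarith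
  -- the auxiliary function
  set g : ℝ → ℝ := fun t => (Ω t - c) * Real.exp (L * t) with hg_def
  have hgderiv : ∀ t, 0 ≤ t → HasDerivAt g
      (((2 * A * Ω t + Q - η t * G * (Ω t) ^ 2) + L * (Ω t - c)) * Real.exp (L * t)) t := by
    intro t ht
    have h1 : HasDerivAt (fun u => Ω u - c) (2 * A * Ω t + Q - η t * G * (Ω t) ^ 2) t :=
      (hode t ht).sub_const c
    have h2' : HasDerivAt (fun u => Real.exp (L * u)) (L * Real.exp (L * t)) t := by
      have := (((hasDerivAt_id t).const_mul L).exp :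
        HasDerivAt (fun u => Real.exp (L * u)) (Real.exp (L * t) * (L * 1)) t)
      simpa [mul_comm] using this
    have : HasDerivAt (fun u => (Ω u - c) * Real.exp (L * u)) _ t := h1.mul h2'
    convert this using 1
    ring
  have hgcont : ContinuousOn g (Set.Icc 0 t₁) :=
    (hcont1.sub continuousOn_const).mul
      ((Real.continuous_exp.comp (continuous_const.mul continuous_id)).continuousOn)
  have hgdiff : ∀ x ∈ Set.Ioo (0:ℝ) t₁, HasDerivAt g
      (((2 * A * Ω x + Q - η x * G * (Ω x) ^ 2) + L * (Ω x - c)) * Real.exp (L * x)) x :=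
    fun x hx => hgderiv x hx.1.le
  have hderiv_nonneg : ∀ x ∈ Set.Ioo (0:ℝ) t₁, 0 ≤ deriv g x := by
    intro x hx
    rw [(hgdiff x hx).deriv]
    have hzpos : c < Ω x := hbefore x hx.1.le hx.2
    have hΩM : Ω x ≤ M := hM x ⟨hx.1.le, hx.2.le⟩
    have hz : 0 ≤ Ω x - c := by linarith
    have hfield : 0 ≤ (2 * A * Ω x + Q - η x * G * (Ω x) ^ 2) + L * (Ω x - c) := by
      rcases hη01 x with h | h
      · rw [h]
        have : 0 ≤ L * (Ω x - c) := mul_nonneg hLpos.le hz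
        nlinarith
      · rw [h, hL_def]
        nlinarith [mul_nonneg (sub_nonneg.2 hΩM) hz, hGc, h2]
    exact mul_nonneg hfield (Real.exp_pos _).le
  have hmono : MonotoneOn g (Set.Icc 0 t₁) := by
    apply monotoneOn_of_deriv_nonneg (convex_Icc 0 t₁) hgcont
    · intro x hx
      rw [interior_Icc] at hx
      exact (hgdiff x hx).differentiableAt.differentiableWithinAt
    · intro x hx
      rw [interior_Icc] at hx
      exact hderiv_nonneg x hx
  have hg0 : 0 < g 0 := by
    rw [hg_def]; simp only [mul_zero, Real.exp_zero, mul_one]; linarith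
  have hgt₁ : g t₁ ≤ 0 := by
    rw [hg_def]
    exact mul_nonpos_of_nonpos_of_nonneg (by linarith) (Real.exp_pos _).le
  have := hmono (Set.left_mem_Icc.2 ht₁0) (Set.right_mem_Icc.2 ht₁0) ht₁0
  linarith
end

section
/- Let f : [0,∞) → ℝ be given by f(u) = −Ā(u)/(Ā(u) + B̄(u)) where Ā, B̄ are twice continuously differentiable with Ā(u) ≥ 0, B̄(u) > 0, Ā''(u) < 0, and B̄''(u) > 0 for all u ≥ 0, Ā(0) = 0, and f attains values strictly below 0 for some u. Then every stationary point of f is a local minimizer, and consequently f has at most one stationary point on (0,∞). -/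
/-- Abstract unimodality structure: with Ā concave, B̄ convex, Ā ≥ 0, B̄ > 0 on [0,∞),
Ā(0) = 0 and f = −Ā/(Ā+B̄) attaining strictly negative values, every stationary point
of f in (0,∞) is a local minimizer, hence f has at most one stationary point there. -/
theorem stationary_points_are_local_minima
    (Abar Bbar : ℝ → ℝ)
    (hA : ContDiff ℝ 2 Abar) (hB : ContDiff ℝ 2 Bbar)
    (hA0 : Abar 0 = 0)
    (hAnn : ∀ u, 0 ≤ u → 0 ≤ Abar u)
    (hBpos : ∀ u, 0 ≤ u → 0 < Bbar u)
    (hA'' : ∀ u, 0 ≤ u → deriv (deriv Abar) u < 0)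
    (hB'' : ∀ u, 0 ≤ u → 0 < deriv (deriv Bbar) u)
    (f : ℝ → ℝ) (hf : ∀ u, f u = -Abar u / (Abar u + Bbar u))
    (hneg : ∃ u, 0 ≤ u ∧ f u < 0) :
    (∀ u, 0 < u → deriv f u = 0 → IsLocalMin f u) ∧
    (∀ u v, 0 < u → 0 < v → deriv f u = 0 → deriv f v = 0 → u = v) := by
  have hfe : f = fun u => -Abar u / (Abar u + Bbar u) := funext hf
  subst hfe
  -- basic differentiability
  have hA1 : Differentiable ℝ Abar := hA.differentiable (by norm_num)
  have hB1 : Differentiable ℝ Bbar := hB.differentiable (by norm_num)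
  have hA2 : ContDiff ℝ 1 (deriv Abar) := by
    have := (contDiff_succ_iff_deriv (n := 1)).mp (by exact_mod_cast hA)
    exact this.2.2
  have hB2 : ContDiff ℝ 1 (deriv Bbar) := by
    have := (contDiff_succ_iff_deriv (n := 1)).mp (by exact_mod_cast hB)
    exact this.2.2
  have hA1' : Differentiable ℝ (deriv Abar) := hA2.differentiable (by norm_num)
  have hB1' : Differentiable ℝ (deriv Bbar) := hB2.differentiable (by norm_num)
  have hD : ∀ x, 0 ≤ x → 0 < Abar x + Bbar x := fun x hx => by
    linarith [hAnn x hx, hBpos x hx]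
  set g : ℝ → ℝ := fun x => Abar x * deriv Bbar x - deriv Abar x * Bbar x with hgdef
  -- derivative of g
  have hgderiv : ∀ x, HasDerivAt g
      (deriv Abar x * deriv Bbar x + Abar x * deriv (deriv Bbar) x -
        (deriv (deriv Abar) x * Bbar x + deriv Abar x * deriv Bbar x)) x := by
    intro x
    exact (((hA1 x).hasDerivAt.mul (hB1' x).hasDerivAt).sub
      ((hA1' x).hasDerivAt.mul (hB1 x).hasDerivAt))
  have hgmono : StrictMonoOn g (Set.Ici (0 : ℝ)) := by
    apply strictMonoOn_of_deriv_pos (convex_Ici 0)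
    · exact (((hA1.continuous.mul hB1'.continuous).sub
        (hA1'.continuous.mul hB1.continuous))).continuousOn
    · intro x hx
      rw [interior_Ici] at hx
      have hx0 : (0 : ℝ) ≤ x := le_of_lt hx
      rw [(hgderiv x).deriv]
      have h1 : 0 ≤ Abar x * deriv (deriv Bbar) x :=
        mul_nonneg (hAnn x hx0) (le_of_lt (hB'' x hx0))
      have h2 : deriv (deriv Abar) x * Bbar x < 0 :=
        mul_neg_of_neg_of_pos (hA'' x hx0) (hBpos x hx0)
      linarith
  -- derivative of f
  have hfderiv : ∀ x, 0 < Abar x + Bbar x →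
      deriv (fun u => -Abar u / (Abar u + Bbar u)) x = g x / (Abar x + Bbar x) ^ 2 := by
    intro x hx
    have hN : HasDerivAt (fun u => -Abar u) (-(deriv Abar x)) x := (hA1 x).hasDerivAt.neg
    have hDd : HasDerivAt (fun u => Abar u + Bbar u) (deriv Abar x + deriv Bbar x) x :=
      (hA1 x).hasDerivAt.add (hB1 x).hasDerivAt
    have := HasDerivAt.deriv (f := fun u => -Abar u / (Abar u + Bbar u)) (hN.div hDd (ne_of_gt hx))
    rw [this]
    congr 1
    simp only [hgdef]
    ring
  constructor
  · -- local minimum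
    intro u hu hderiv
    have hu0 : (0 : ℝ) ≤ u := le_of_lt hu
    have hgu : g u = 0 := by
      have hx := hD u hu0
      rw [hfderiv u hx] at hderiv
      have h2 : (Abar u + Bbar u) ^ 2 ≠ 0 := pow_ne_zero _ (ne_of_gt hx)
      exact (div_eq_zero_iff.mp hderiv).resolve_right h2
    -- f is antitone on [u/2, u] and monotone on [u, u+1]
    have hcont : ∀ s : Set ℝ, s ⊆ Set.Ici (0:ℝ) →
        ContinuousOn (fun u => -Abar u / (Abar u + Bbar u)) s := by
      intro s hs
      exact ContinuousOn.div (hA1.continuous.neg.continuousOn)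
        ((hA1.continuous.add hB1.continuous).continuousOn)
        (fun x hx => ne_of_gt (hD x (hs hx)))
    have hdiff : ∀ x : ℝ, 0 ≤ x →
        DifferentiableAt ℝ (fun u => -Abar u / (Abar u + Bbar u)) x := by
      intro x hx
      have hN : HasDerivAt (fun u => -Abar u) (-(deriv Abar x)) x := (hA1 x).hasDerivAt.neg
      have hDd : HasDerivAt (fun u => Abar u + Bbar u) (deriv Abar x + deriv Bbar x) x :=
        (hA1 x).hasDerivAt.add (hB1 x).hasDerivAt
      exact (hN.div hDd (ne_of_gt (hD x hx))).differentiableAt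
    have hanti : AntitoneOn (fun u => -Abar u / (Abar u + Bbar u)) (Set.Icc (u/2) u) := by
      apply antitoneOn_of_deriv_nonpos (convex_Icc _ _)
      · exact hcont _ (fun x hx => by
          have := hx.1; simp only [Set.mem_Ici]; linarith [hx.1])
      · intro x hx
        rw [interior_Icc] at hx
        exact (hdiff x (by linarith [hx.1])).differentiableWithinAt
      · intro x hx
        rw [interior_Icc] at hx
        have hx0 : (0:ℝ) ≤ x := by linarith [hx.1]
        rw [hfderiv x (hD x hx0)]
        apply div_nonpos_of_nonpos_of_nonneg
        · have := hgmono.le_iff_le (Set.mem_Ici.mpr hx0) (Set.mem_Ici.mpr hu0)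
          have hle : g x ≤ g u := by
            exact le_of_lt (hgmono (Set.mem_Ici.mpr hx0) (Set.mem_Ici.mpr hu0) hx.2)
          linarith [hgu ▸ hle]
        · positivity
      done
    have hmono : MonotoneOn (fun u => -Abar u / (Abar u + Bbar u)) (Set.Icc u (u+1)) := by
      apply monotoneOn_of_deriv_nonneg (convex_Icc _ _)
      · exact hcont _ (fun x hx => by
          simp only [Set.mem_Ici]; linarith [hx.1])
      · intro x hx
        rw [interior_Icc] at hx
        exact (hdiff x (by linarith [hx.1])).differentiableWithinAt
      · intro x hx
        rw [interior_Icc] at hx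
        have hx0 : (0:ℝ) ≤ x := by linarith [hx.1]
        rw [hfderiv x (hD x hx0)]
        apply div_nonneg
        · have hle : g u ≤ g x :=
            le_of_lt (hgmono (Set.mem_Ici.mpr hu0) (Set.mem_Ici.mpr hx0) hx.1)
          linarith [hgu ▸ hle]
        · positivity
    have hnb : Set.Ioo (u/2) (u+1) ∈ nhds u := Ioo_mem_nhds (by linarith) (by linarith)
    filter_upwards [hnb] with v hv
    rcases le_total v u with h | h
    · exact hanti (Set.mem_Icc.mpr ⟨le_of_lt hv.1, h⟩)
        (Set.mem_Icc.mpr ⟨by linarith, le_refl u⟩) h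
    · exact hmono (Set.mem_Icc.mpr ⟨le_refl u, by linarith⟩)
        (Set.mem_Icc.mpr ⟨h, le_of_lt hv.2⟩) h
  · -- uniqueness
    intro u v hu hv hdu hdv
    have hu0 : (0:ℝ) ≤ u := le_of_lt hu
    have hv0 : (0:ℝ) ≤ v := le_of_lt hv
    have hgu : g u = 0 := by
      rw [hfderiv u (hD u hu0)] at hdu
      exact (div_eq_zero_iff.mp hdu).resolve_right (pow_ne_zero _ (ne_of_gt (hD u hu0)))
    have hgv : g v = 0 := by
      rw [hfderiv v (hD v hv0)] at hdv
      exact (div_eq_zero_iff.mp hdv).resolve_right (pow_ne_zero _ (ne_of_gt (hD v hv0)))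
    exact hgmono.injOn (Set.mem_Ici.mpr hu0) (Set.mem_Ici.mpr hv0) (hgu.trans hgv.symm)
end
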